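/- Let ω ∈ (0,1), let s ≥ 1, let a_1,…,a_s and b_1,…,b_s be reals with a_j ≥ a_* > 0 and b_j ≥ b_* > 0, let m_1,…,m_s be odd positive integers, set V := {h ∈ ℤ^s : |h_j| ≤ (m_j−1)/2 for all j} and n := ∏_{j=1}^s m_j, and let D := ∑_{h=1}^∞ ω^{a_*(h^{b_*}−1)}. Then ∑_{h ∈ ℤ^s ∖ V} ω_h ≤ n · (−1 + ∏_{j=1}^s (1 + 2 D ω^{a_j ((m_j+1)/2)^{b_j}})). -/

import Mathlib

open scoped ENNReal
open Set

private lemma myTsumPiProd : ∀ (s : ℕ) (f : Fin s → ℤ → ℝ≥0∞),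
    ∑' h : Fin s → ℤ, ∏ j, f j (h j) = ∏ j, ∑' k, f j k := by
  intro s
  induction s with
  | zero =>
    intro f
    rw [tsum_eq_single (fun i => Fin.elim0 i) (by
      intro b hb; exact absurd (Subsingleton.elim b _) hb)]
    simp
  | succ n ih =>
    intro f
    rw [← (Fin.consEquiv (fun _ : Fin (n+1) => ℤ)).tsum_eq (fun h => ∏ j, f j (h j))]
    have h1 : ∀ p : ℤ × (Fin n → ℤ),
        (∏ j, f j ((Fin.consEquiv (fun _ : Fin (n+1) => ℤ)) p j))
          = f 0 p.1 * ∏ i : Fin n, f i.succ (p.2 i) := by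
      intro p
      rw [Fin.prod_univ_succ]
      simp [Fin.consEquiv, Fin.cons_succ]
    simp_rw [h1]
    rw [ENNReal.tsum_prod']
    simp_rw [ENNReal.tsum_mul_left]
    rw [ENNReal.tsum_mul_right, ih (fun i => f i.succ), Fin.prod_univ_succ]

private lemma myBridge {α : Type*} {f : α → ℝ} (hf : ∀ x, 0 ≤ f x) {c : ℝ} (hc : 0 ≤ c)
    (h : ∑' x, ENNReal.ofReal (f x) ≤ ENNReal.ofReal c) : ∑' x, f x ≤ c := by
  have hfin : ∑' x, ENNReal.ofReal (f x) ≠ ∞ := (h.trans_lt ENNReal.ofReal_lt_top).ne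
  have hs : Summable f := by
    refine (ENNReal.summable_toReal hfin).congr fun x => ?_
    exact ENNReal.toReal_ofReal (hf x)
  rw [← ENNReal.ofReal_le_ofReal_iff hc, ENNReal.ofReal_tsum_of_nonneg hf hs]
  exact h

private lemma myRpowSum {x : ℝ} (hx : 0 < x) {ι : Type*} (s : Finset ι) (F : ι → ℝ) :
    x ^ (∑ i ∈ s, F i) = ∏ i ∈ s, x ^ F i := by
  induction s using Finset.cons_induction with
  | empty => simp
  | cons i s hi ih => rw [Finset.sum_cons, Finset.prod_cons, Real.rpow_add hx, ih]

private lemma mySummableD {ω aS bS : ℝ} (hω0 : 0 < ω) (hω1 : ω < 1)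
    (haS : 0 < aS) (hbS : 0 < bS) :
    Summable (fun k : ℕ => ω ^ (aS * (((k : ℝ) + 1) ^ bS - 1))) := by
  have hlog : Real.log ω < 0 := Real.log_neg hω0 hω1
  set c : ℝ := aS * (-Real.log ω) with hc
  have hcpos : 0 < c := mul_pos haS (by linarith)
  set d : ℝ := 2 / bS with hd
  have hdpos : 0 < d := by positivity
  set e : ℝ := d ^ 2 / c with he
  have hce : c * e = d ^ 2 := by rw [he, mul_div_assoc']; exact mul_div_cancel_left₀ _ hcpos.ne'
  set M : ℝ := c + e with hM
  have key : ∀ k : ℕ, ω ^ (aS * (((k : ℝ) + 1) ^ bS - 1))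
      ≤ Real.exp M * (1 / ((k : ℝ) + 1) ^ 2) := by
    intro k
    set x : ℝ := (k : ℝ) + 1 with hxdef
    have hx1 : (1:ℝ) ≤ x := by
      have : (0:ℝ) ≤ (k : ℝ) := Nat.cast_nonneg k
      simp only [hxdef]; linarith
    have hx0 : (0:ℝ) < x := by linarith
    set y : ℝ := x ^ (bS / 2) with hy
    have hy0 : (0:ℝ) < y := Real.rpow_pos_of_pos hx0 _
    have hy2 : y ^ 2 = x ^ bS := by
      rw [sq, ← Real.rpow_add hx0]; norm_num
    have hlogy : Real.log y = (bS / 2) * Real.log x := Real.log_rpow hx0 _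
    have hlogx : Real.log x ≤ d * y := by
      have h2 : Real.log y ≤ y - 1 := Real.log_le_sub_one_of_pos hy0
      have h3 : Real.log x = d * Real.log y := by
        rw [hlogy, hd]; field_simp
      rw [h3]
      have : Real.log y ≤ y := by linarith
      nlinarith
    have hquad : 2 * (d * y) ≤ c * y ^ 2 + e := by
      nlinarith [sq_nonneg (c * y - d), hcpos]
    have hexp : aS * (x ^ bS - 1) * Real.log ω ≤ M - 2 * Real.log x := by
      have h4 : aS * (x ^ bS - 1) * Real.log ω = -(c * (y ^ 2 - 1)) := by
        rw [hy2, hc]; ring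
      rw [h4]
      have h5 : 2 * Real.log x ≤ c * y ^ 2 + e := le_trans (by linarith) hquad
      simp only [hM]; linarith
    calc ω ^ (aS * (x ^ bS - 1)) = Real.exp (Real.log ω * (aS * (x ^ bS - 1))) :=
          Real.rpow_def_of_pos hω0 _
      _ ≤ Real.exp (M - 2 * Real.log x) := by
          apply Real.exp_le_exp.mpr; rw [mul_comm]; exact hexp
      _ = Real.exp M * (1 / x ^ 2) := by
          rw [Real.exp_sub]
          have : Real.exp (2 * Real.log x) = x ^ 2 := by
            rw [two_mul, Real.exp_add, Real.exp_log hx0, sq]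
          rw [this]; ring
  refine Summable.of_nonneg_of_le (fun k => Real.rpow_nonneg hω0.le _) key ?_
  apply Summable.mul_left
  have hbase : Summable (fun n : ℕ => 1 / (n : ℝ) ^ 2) :=
    Real.summable_one_div_nat_pow.mpr one_lt_two
  have := (summable_nat_add_iff (f := fun n : ℕ => 1 / (n : ℝ) ^ 2) 1).mpr hbase
  refine this.congr fun k => ?_
  push_cast
  ring

private lemma myCenter {ω aj bj : ℝ} (hω0 : 0 < ω) (hω1 : ω ≤ 1) (haj : 0 ≤ aj) (t : ℕ) :
    ∑' k : ℤ, (if |k| ≤ (t : ℤ) then ENNReal.ofReal (ω ^ (aj * |(k : ℝ)| ^ bj)) else 0)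
      ≤ ((2 * t + 1 : ℕ) : ℝ≥0∞) := by
  have hle : ∀ k : ℤ, (if |k| ≤ (t : ℤ) then ENNReal.ofReal (ω ^ (aj * |(k : ℝ)| ^ bj)) else 0)
      ≤ (if |k| ≤ (t : ℤ) then 1 else 0) := by
    intro k
    split
    · exact ENNReal.ofReal_le_one.mpr (Real.rpow_le_one hω0.le hω1
        (mul_nonneg haj (Real.rpow_nonneg (abs_nonneg _) _)))
    · exact le_refl _
  refine (ENNReal.tsum_le_tsum hle).trans ?_
  rw [tsum_eq_sum (s := Finset.Icc (-(t : ℤ)) t) (by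
    intro k hk
    rw [if_neg]
    intro habs
    exact hk (Finset.mem_Icc.mpr (abs_le.mp habs)))]
  calc ∑ k ∈ Finset.Icc (-(t : ℤ)) t, (if |k| ≤ (t : ℤ) then (1:ℝ≥0∞) else 0)
      ≤ ∑ _k ∈ Finset.Icc (-(t : ℤ)) t, (1:ℝ≥0∞) := by
        refine Finset.sum_le_sum fun k _ => ?_
        split <;> simp
    _ = ((2 * t + 1 : ℕ) : ℝ≥0∞) := by
        rw [Finset.sum_const, Int.card_Icc]
        simp only [nsmul_eq_mul, mul_one]
        congr 1
        omega

private lemma myTailNat {ω aj bj aS bS : ℝ} (hω0 : 0 < ω) (hω1 : ω < 1)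
    (haS : 0 < aS) (hbS : 0 < bS) (haj : aS ≤ aj) (hbj : bS ≤ bj) {μ : ℕ} (hμ : 1 ≤ μ) :
    ∑' n : ℕ, (if μ ≤ n then ENNReal.ofReal (ω ^ (aj * (n : ℝ) ^ bj)) else 0)
      ≤ ENNReal.ofReal ((μ : ℝ) * ((∑' k : ℕ, ω ^ (aS * (((k : ℝ) + 1) ^ bS - 1)))
          * ω ^ (aj * (μ : ℝ) ^ bj))) := by
  haveI : NeZero μ := ⟨by omega⟩
  have haj0 : 0 < aj := lt_of_lt_of_le haS haj
  have hbj0 : 0 < bj := lt_of_lt_of_le hbS hbj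
  set D := ∑' k : ℕ, ω ^ (aS * (((k : ℝ) + 1) ^ bS - 1)) with hD
  set W := ω ^ (aj * (μ : ℝ) ^ bj) with hW
  have hW0 : 0 ≤ W := Real.rpow_nonneg hω0.le _
  have hD0 : 0 ≤ D := tsum_nonneg fun k => Real.rpow_nonneg hω0.le _
  set N : ℕ → ℝ≥0∞ := fun n => if μ ≤ n then ENNReal.ofReal (ω ^ (aj * (n : ℝ) ^ bj)) else 0
    with hN
  set B : ℕ → ℝ≥0∞ := fun q =>
    if 1 ≤ q then ENNReal.ofReal (W * ω ^ (aS * ((q : ℝ) ^ bS - 1))) else 0 with hB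
  have claim1 : ∀ (q : ℕ) (r : Fin μ), N (q * μ + (r : ℕ)) ≤ B q := by
    intro q r
    rcases Nat.eq_zero_or_pos q with hq | hq
    · subst hq
      simp only [hN, hB, zero_mul, zero_add]
      rw [if_neg (by omega), if_neg (Nat.lt_irrefl 0 |> fun _ => by omega)]
    · have hq1 : 1 ≤ q := hq
      simp only [hN, hB, if_pos hq1]
      split
      · apply ENNReal.ofReal_le_ofReal
        have hqR : (1:ℝ) ≤ (q:ℝ) := by exact_mod_cast hq1
        have hμR : (1:ℝ) ≤ (μ:ℝ) := by exact_mod_cast hμ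
        have hqμR : ((q * μ + (r:ℕ) : ℕ) : ℝ) = (q:ℝ) * μ + (r:ℕ) := by push_cast; ring
        -- step 1: exponent monotone in base
        have e1 : ω ^ (aj * ((q * μ + (r:ℕ) : ℕ) : ℝ) ^ bj) ≤ ω ^ (aj * ((q:ℝ) * μ) ^ bj) := by
          apply Real.rpow_le_rpow_of_exponent_ge hω0 hω1.le
          apply mul_le_mul_of_nonneg_left _ haj0.le
          apply Real.rpow_le_rpow (by positivity) _ hbj0.le
          rw [hqμR]
          have : (0:ℝ) ≤ (r:ℕ) := Nat.cast_nonneg _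
          linarith
        refine e1.trans ?_
        -- step 2: split the exponent
        have e2 : ((q:ℝ) * μ) ^ bj = (μ:ℝ) ^ bj * (q:ℝ) ^ bj := by
          rw [mul_comm ((q:ℝ)) ((μ:ℝ)), Real.mul_rpow (by positivity) (by positivity)]
        have e3 : aj * ((q:ℝ) * μ) ^ bj
            = aj * (μ:ℝ) ^ bj + aj * (μ:ℝ) ^ bj * ((q:ℝ) ^ bj - 1) := by
          rw [e2]; ring
        rw [e3, Real.rpow_add hω0]
        apply mul_le_mul_of_nonneg_left _ hW0
        -- step 3: compare tail exponents
        apply Real.rpow_le_rpow_of_exponent_ge hω0 hω1.le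
        have h1μ : (1:ℝ) ≤ (μ:ℝ) ^ bj := by
          rw [show (1:ℝ) = (μ:ℝ) ^ (0:ℝ) by rw [Real.rpow_zero]]
          exact Real.rpow_le_rpow_of_exponent_le (by exact_mod_cast hμ) hbj0.le
        have h2q : (q:ℝ) ^ bS - 1 ≤ (q:ℝ) ^ bj - 1 := by
          have := Real.rpow_le_rpow_of_exponent_le (by exact_mod_cast hq1 : (1:ℝ) ≤ (q:ℝ)) hbj
          linarith
        have h3q : (0:ℝ) ≤ (q:ℝ) ^ bS - 1 := by
          have : (1:ℝ) ≤ (q:ℝ) ^ bS := by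
            rw [show (1:ℝ) = (q:ℝ) ^ (0:ℝ) by rw [Real.rpow_zero]]
            exact Real.rpow_le_rpow_of_exponent_le (by exact_mod_cast hq1) hbS.le
          linarith
        calc aS * ((q:ℝ) ^ bS - 1) ≤ aj * ((q:ℝ) ^ bS - 1) :=
              mul_le_mul_of_nonneg_right haj h3q
          _ ≤ aj * (μ:ℝ) ^ bj * ((q:ℝ) ^ bS - 1) := by
              nlinarith [mul_nonneg (mul_nonneg haj0.le (sub_nonneg.mpr h1μ)) h3q]
          _ ≤ aj * (μ:ℝ) ^ bj * ((q:ℝ) ^ bj - 1) := by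
              apply mul_le_mul_of_nonneg_left h2q
              positivity
      · positivity
  have claim2 : ∀ q : ℕ, (∑' r : Fin μ, N (q * μ + (r : ℕ))) ≤ (μ : ℝ≥0∞) * B q := by
    intro q
    rw [tsum_fintype]
    calc ∑ r : Fin μ, N (q * μ + (r:ℕ)) ≤ Finset.univ.card • B q :=
          Finset.sum_le_card_nsmul _ _ _ (fun r _ => claim1 q r)
      _ = (μ : ℝ≥0∞) * B q := by
          rw [Finset.card_univ, Fintype.card_fin, nsmul_eq_mul]
  have hre : ∑' n : ℕ, N n = ∑' p : ℕ × Fin μ, N (p.1 * μ + (p.2 : ℕ)) := by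
    rw [← (Nat.divModEquiv μ).symm.tsum_eq N]
    congr 1
  rw [hre, ENNReal.tsum_prod']
  have step : ∑' (q : ℕ), ∑' (r : Fin μ), N (q * μ + (r:ℕ))
      ≤ ∑' (q : ℕ), (μ : ℝ≥0∞) * B q := ENNReal.tsum_le_tsum claim2
  refine step.trans ?_
  rw [ENNReal.tsum_mul_left]
  have hBsum : ∑' q : ℕ, B q = ENNReal.ofReal W * ENNReal.ofReal D := by
    rw [tsum_eq_zero_add' ENNReal.summable]
    have hB0 : B 0 = 0 := by simp [hB]
    have hBS : ∀ q : ℕ, B (q + 1)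
        = ENNReal.ofReal W * ENNReal.ofReal (ω ^ (aS * (((q:ℝ) + 1) ^ bS - 1))) := by
      intro q
      simp only [hB, if_pos (Nat.succ_le_succ (Nat.zero_le q))]
      rw [ENNReal.ofReal_mul hW0]
      congr 3
      push_cast
      ring
    rw [hB0, zero_add]
    simp_rw [hBS]
    rw [ENNReal.tsum_mul_left]
    congr 1
    rw [ENNReal.ofReal_tsum_of_nonneg (fun k => Real.rpow_nonneg hω0.le _)
      (mySummableD hω0 hω1 haS hbS)]
  rw [hBsum, ← ENNReal.ofReal_mul hW0, ← ENNReal.ofReal_natCast μ,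
    ← ENNReal.ofReal_mul (Nat.cast_nonneg μ)]
  apply ENNReal.ofReal_le_ofReal
  exact le_of_eq (by ring)

private lemma myTailInt {ω aj bj aS bS : ℝ} (hω0 : 0 < ω) (hω1 : ω < 1)
    (haS : 0 < aS) (hbS : 0 < bS) (haj : aS ≤ aj) (hbj : bS ≤ bj) {μ : ℕ} (hμ : 1 ≤ μ) :
    ∑' k : ℤ, (if (μ : ℤ) ≤ |k| then ENNReal.ofReal (ω ^ (aj * |(k : ℝ)| ^ bj)) else 0)
      ≤ ENNReal.ofReal (2 * ((μ : ℝ) * ((∑' k : ℕ, ω ^ (aS * (((k : ℝ) + 1) ^ bS - 1)))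
          * ω ^ (aj * (μ : ℝ) ^ bj)))) := by
  set N : ℕ → ℝ≥0∞ := fun n => if μ ≤ n then ENNReal.ofReal (ω ^ (aj * (n : ℝ) ^ bj)) else 0
    with hN
  set G : ℤ → ℝ≥0∞ := fun k =>
    if (μ : ℤ) ≤ |k| then ENNReal.ofReal (ω ^ (aj * |(k : ℝ)| ^ bj)) else 0 with hG
  have hpos : ∀ n : ℕ, G (n : ℤ) = N n := by
    intro n
    simp only [hG, hN, Int.abs_natCast, Int.cast_natCast, Nat.abs_cast, Nat.cast_le]
  have hneg : ∀ n : ℕ, G (-((n : ℤ) + 1)) = N (n + 1) := by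
    intro n
    simp only [hG, hN]
    have h1 : |(-((n : ℤ) + 1))| = (n : ℤ) + 1 := by
      rw [abs_neg, abs_of_nonneg (by positivity)]
    have h2 : |((-((n : ℤ) + 1) : ℤ) : ℝ)| = ((n : ℕ) : ℝ) + 1 := by
      push_cast
      rw [abs_neg, abs_of_nonneg (by positivity)]
    rw [h1, h2]
    push_cast
    split_ifs with hA hB <;> first | rfl | (exfalso; omega)
  calc ∑' k : ℤ, G k = (∑' n : ℕ, G (n : ℤ)) + ∑' n : ℕ, G (-((n : ℤ) + 1)) :=
        tsum_of_nat_of_neg_add_one ENNReal.summable ENNReal.summable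
    _ = (∑' n : ℕ, N n) + ∑' n : ℕ, N (n + 1) := by
        congr 1
        · exact tsum_congr hpos
        · exact tsum_congr hneg
    _ ≤ (∑' n : ℕ, N n) + ∑' n : ℕ, N n := by
        exact add_le_add_right
          (ENNReal.tsum_comp_le_tsum_of_injective (add_left_injective 1) N) _
    _ = 2 * ∑' n : ℕ, N n := by rw [two_mul]
    _ ≤ 2 * ENNReal.ofReal ((μ : ℝ) * ((∑' k : ℕ, ω ^ (aS * (((k : ℝ) + 1) ^ bS - 1)))
          * ω ^ (aj * (μ : ℝ) ^ bj))) := by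
        gcongr
        exact myTailNat hω0 hω1 haS hbS haj hbj hμ
    _ = ENNReal.ofReal (2 * ((μ : ℝ) * ((∑' k : ℕ, ω ^ (aS * (((k : ℝ) + 1) ^ bS - 1)))
          * ω ^ (aj * (μ : ℝ) ^ bj)))) := by
        rw [ENNReal.ofReal_mul (by norm_num : (0:ℝ) ≤ 2), ENNReal.ofReal_ofNat]

private lemma myProdDiff {s : ℕ} (S T M C : Fin s → ℝ)
    (hS0 : ∀ j, 0 ≤ S j) (hT0 : ∀ j, 0 ≤ T j) (hTM : ∀ j, T j ≤ M j) (hC : ∀ j, 0 ≤ C j)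
    (hS : ∀ j, S j ≤ T j + M j * C j) :
    ∏ j, S j - ∏ j, T j ≤ ∏ j, (M j * (1 + C j)) - ∏ j, M j := by
  have hM0 : ∀ j, 0 ≤ M j := fun j => (hT0 j).trans (hTM j)
  have h1 : ∏ j, S j ≤ ∏ j, (M j * C j + T j) :=
    Finset.prod_le_prod (fun j _ => hS0 j) (fun j _ => by linarith [hS j])
  have h2 : ∏ j, (M j * (1 + C j)) = ∏ j, (M j * C j + M j) :=
    Finset.prod_congr rfl (fun j _ => by ring)
  rw [h2, Finset.prod_add,
    ← Finset.add_sum_erase _ _ (Finset.empty_mem_powerset (Finset.univ : Finset (Fin s)))]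
  simp only [Finset.prod_empty, one_mul, Finset.sdiff_empty]
  have h3 : ∑ A ∈ (Finset.univ : Finset (Fin s)).powerset.erase ∅,
        (∏ j ∈ A, M j * C j) * ∏ j ∈ Finset.univ \ A, T j
      ≤ ∑ A ∈ (Finset.univ : Finset (Fin s)).powerset.erase ∅,
        (∏ j ∈ A, M j * C j) * ∏ j ∈ Finset.univ \ A, M j := by
    refine Finset.sum_le_sum fun A _ => ?_
    refine mul_le_mul_of_nonneg_left ?_ (Finset.prod_nonneg fun j _ => mul_nonneg (hM0 j) (hC j))
    exact Finset.prod_le_prod (fun j _ => hT0 j) (fun j _ => hTM j)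
  have h4 : ∏ j, S j ≤ (∏ j, T j)
      + ∑ A ∈ (Finset.univ : Finset (Fin s)).powerset.erase ∅,
        (∏ j ∈ A, M j * C j) * ∏ j ∈ Finset.univ \ A, T j := by
    calc ∏ j, S j ≤ ∏ j, (M j * C j + T j) := h1
      _ = _ := by
        rw [Finset.prod_add,
          ← Finset.add_sum_erase _ _ (Finset.empty_mem_powerset (Finset.univ : Finset (Fin s)))]
        simp only [Finset.prod_empty, one_mul, Finset.sdiff_empty]
  linarith


/-- for odd mesh-sizes m_j, the fundamental domain
V = {h ∈ ℤ^s : |h_j| ≤ (m_j-1)/2}, n = ∏_j m_j and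
D = ∑_{h=1}^∞ ω^{a_*(h^{b_*}-1)}, one has
∑_{h ∈ ℤ^s ∖ V} ω_h ≤ n(-1 + ∏_{j=1}^s (1 + 2 D ω^{a_j((m_j+1)/2)^{b_j}})). -/
theorem stmt16 (ω : ℝ) (hω : ω ∈ Set.Ioo (0:ℝ) 1) (s : ℕ) (hs : 1 ≤ s)
    (a b : Fin s → ℝ) (aStar bStar : ℝ) (haStar : 0 < aStar) (hbStar : 0 < bStar)
    (ha : ∀ j, aStar ≤ a j) (hb : ∀ j, bStar ≤ b j)
    (m : Fin s → ℕ) (hm : ∀ j, 0 < m j) (hmodd : ∀ j, Odd (m j)) :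
    ∑' h : {h : Fin s → ℤ // ¬ ∀ j, 2 * |h j| ≤ (m j : ℤ) - 1},
        ω ^ (∑ j, a j * |(h.1 j : ℝ)| ^ (b j)) ≤
      ((∏ j, m j : ℕ) : ℝ) *
        (-1 + ∏ j, (1 + 2 * (∑' k : ℕ, ω ^ (aStar * (((k : ℝ) + 1) ^ bStar - 1))) *
          ω ^ (a j * (((m j : ℝ) + 1) / 2) ^ (b j)))) := by
  obtain ⟨hω0, hω1⟩ := hω
  have hodd : ∀ j, ∃ u : ℕ, m j = 2 * u + 1 := fun j => by
    obtain ⟨u, hu⟩ := hmodd j; exact ⟨u, by omega⟩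
  choose t ht using hodd
  set μ : Fin s → ℕ := fun j => t j + 1 with hμdef
  have hμ1 : ∀ j, 1 ≤ μ j := fun j => Nat.succ_le_succ (Nat.zero_le _)
  have hμm : ∀ j, μ j ≤ m j := fun j => by simp only [hμdef]; rw [ht j]; omega
  have hμcast : ∀ j : Fin s, ((m j : ℝ) + 1) / 2 = (μ j : ℝ) := by
    intro j; rw [ht j]; simp only [hμdef]; push_cast; ring
  simp only [hμcast]
  set D : ℝ := ∑' k : ℕ, ω ^ (aStar * (((k : ℝ) + 1) ^ bStar - 1)) with hD
  have hD0 : 0 ≤ D := tsum_nonneg fun k => Real.rpow_nonneg hω0.le _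
  have haj0 : ∀ j, (0:ℝ) < a j := fun j => lt_of_lt_of_le haStar (ha j)
  -- ENNReal machinery
  set f : Fin s → ℤ → ℝ≥0∞ :=
    fun j k => ENNReal.ofReal (ω ^ (a j * |(k : ℝ)| ^ (b j))) with hf
  set fT : Fin s → ℤ → ℝ≥0∞ := fun j k => if |k| ≤ (t j : ℤ) then f j k else 0 with hfT
  set fR : Fin s → ℤ → ℝ≥0∞ := fun j k => if (μ j : ℤ) ≤ |k| then f j k else 0 with hfR
  have hμZ : ∀ j, ((μ j : ℕ) : ℤ) = (t j : ℤ) + 1 := fun j => by simp [hμdef]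
  have hsplit : ∀ j k, fT j k + fR j k = f j k := by
    intro j k
    by_cases h : |k| ≤ (t j : ℤ)
    · simp only [hfT, hfR]
      rw [if_pos h, if_neg (show ¬ ((μ j : ℤ) ≤ |k|) by rw [hμZ j]; omega), add_zero]
    · simp only [hfT, hfR]
      rw [if_neg h, if_pos (show (μ j : ℤ) ≤ |k| by rw [hμZ j]; omega), zero_add]
  set Tq : Fin s → ℝ≥0∞ := fun j => ∑' k : ℤ, fT j k with hTqd
  set Rq : Fin s → ℝ≥0∞ := fun j => ∑' k : ℤ, fR j k with hRqd
  set Sq : Fin s → ℝ≥0∞ := fun j => ∑' k : ℤ, f j k with hSqd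
  have hTle : ∀ j, Tq j ≤ ((m j : ℕ) : ℝ≥0∞) := by
    intro j
    have h0 := myCenter (bj := b j) hω0 hω1.le (haj0 j).le (t j)
    rw [show 2 * t j + 1 = m j from (ht j).symm] at h0
    calc Tq j = ∑' k : ℤ,
        (if |k| ≤ (t j : ℤ) then ENNReal.ofReal (ω ^ (a j * |(k : ℝ)| ^ b j)) else 0) := by
          simp only [hTqd, hfT, hf]
      _ ≤ _ := h0
  have hRle : ∀ j, Rq j ≤ ENNReal.ofReal ((m j : ℝ) * (2 * D * ω ^ (a j * (μ j : ℝ) ^ b j))) := by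
    intro j
    have h0 : Rq j = ∑' k : ℤ,
        (if (μ j : ℤ) ≤ |k| then ENNReal.ofReal (ω ^ (a j * |(k : ℝ)| ^ b j)) else 0) := by
      simp only [hRqd, hfR, hf]
    rw [h0]
    refine (myTailInt hω0 hω1 haStar hbStar (ha j) (hb j) (hμ1 j)).trans ?_
    apply ENNReal.ofReal_le_ofReal
    have hWj : (0:ℝ) ≤ ω ^ (a j * (μ j : ℝ) ^ b j) := Real.rpow_nonneg hω0.le _
    have hmm : (μ j : ℝ) ≤ (m j : ℝ) := by exact_mod_cast hμm j
    nlinarith [mul_nonneg hD0 hWj, Nat.cast_nonneg (α := ℝ) (μ j)]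
  have hSsplit : ∀ j, Sq j = Tq j + Rq j := by
    intro j
    rw [hTqd, hRqd, ← ENNReal.tsum_add]
    exact tsum_congr fun k => (hsplit j k).symm
  have hTfin : ∀ j, Tq j ≠ ⊤ :=
    fun j => (lt_of_le_of_lt (hTle j) (ENNReal.natCast_lt_top _)).ne
  have hRfin : ∀ j, Rq j ≠ ⊤ :=
    fun j => (lt_of_le_of_lt (hRle j) ENNReal.ofReal_lt_top).ne
  have hSfin : ∀ j, Sq j ≠ ⊤ := by
    intro j; rw [hSsplit j]; exact ENNReal.add_ne_top.mpr ⟨hTfin j, hRfin j⟩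
  -- full sums over the lattice
  have hFull : ∑' h : Fin s → ℤ, ∏ j, f j (h j) = ∏ j, Sq j := myTsumPiProd s f
  have hCen : ∑' h : Fin s → ℤ, ∏ j, fT j (h j) = ∏ j, Tq j := myTsumPiProd s fT
  set V : Set (Fin s → ℤ) := {h | ∀ j, 2 * |h j| ≤ (m j : ℤ) - 1} with hV
  have hmZ : ∀ j, (m j : ℤ) = 2 * (t j : ℤ) + 1 := fun j => by exact_mod_cast ht j
  have hVind : ∀ h : Fin s → ℤ,
      V.indicator (fun h => ∏ j, f j (h j)) h = ∏ j, fT j (h j) := by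
    intro h
    by_cases hh : h ∈ V
    · rw [Set.indicator_of_mem hh]
      refine Finset.prod_congr rfl fun j _ => ?_
      have := hh j
      simp only [hfT]
      rw [if_pos (show |h j| ≤ (t j : ℤ) by have := hmZ j; omega)]
    · rw [Set.indicator_of_notMem hh]
      have hh' : ¬ ∀ j, 2 * |h j| ≤ (m j : ℤ) - 1 := hh
      push_neg at hh'
      obtain ⟨j, hj⟩ := hh'
      refine (Finset.prod_eq_zero (Finset.mem_univ j) ?_).symm
      simp only [hfT]
      rw [if_neg (show ¬ (|h j| ≤ (t j : ℤ)) by have := hmZ j; omega)]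
  set L : ℝ≥0∞ := ∑' h : Fin s → ℤ, Vᶜ.indicator (fun h => ∏ j, f j (h j)) h with hL
  have hLC : L + ∏ j, Tq j = ∏ j, Sq j := by
    rw [← hCen, ← hFull, hL, ← ENNReal.tsum_add]
    apply tsum_congr
    intro h
    rw [← hVind h]
    have := congrFun (Set.indicator_self_add_compl V (fun h => ∏ j, f j (h j))) h
    simp only [Pi.add_apply] at this
    rw [add_comm] at this
    rw [this]
  have hProdSfin : (∏ j, Sq j) ≠ ⊤ := ENNReal.prod_ne_top fun j _ => hSfin j
  have hCfin : (∏ j, Tq j) ≠ ⊤ := ENNReal.prod_ne_top fun j _ => hTfin j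
  have hLfin : L ≠ ⊤ := by
    refine (lt_of_le_of_lt ?_ hProdSfin.lt_top).ne
    rw [← hLC]; exact le_self_add
  -- real versions
  set Sr : Fin s → ℝ := fun j => (Sq j).toReal with hSr
  set Tr : Fin s → ℝ := fun j => (Tq j).toReal with hTr
  have hTr0 : ∀ j, 0 ≤ Tr j := fun j => ENNReal.toReal_nonneg
  have hSr0 : ∀ j, 0 ≤ Sr j := fun j => ENNReal.toReal_nonneg
  have hTrM : ∀ j, Tr j ≤ (m j : ℝ) := by
    intro j
    have := ENNReal.toReal_mono (ENNReal.natCast_ne_top (m j)) (hTle j)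
    simpa using this
  have hSrle : ∀ j, Sr j ≤ Tr j + (m j : ℝ) * (2 * D * ω ^ (a j * (μ j : ℝ) ^ b j)) := by
    intro j
    have h1 : Sr j = Tr j + (Rq j).toReal := by
      show (Sq j).toReal = (Tq j).toReal + (Rq j).toReal
      rw [hSsplit j, ENNReal.toReal_add (hTfin j) (hRfin j)]
    rw [h1]
    have h2 : (Rq j).toReal ≤ (m j : ℝ) * (2 * D * ω ^ (a j * (μ j : ℝ) ^ b j)) := by
      have := ENNReal.toReal_mono ENNReal.ofReal_ne_top (hRle j)
      rwa [ENNReal.toReal_ofReal (by positivity)] at this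
    linarith
  have hLtoReal : L.toReal = ∏ j, Sr j - ∏ j, Tr j := by
    have h10 := congrArg ENNReal.toReal hLC
    rw [ENNReal.toReal_add hLfin hCfin, ENNReal.toReal_prod, ENNReal.toReal_prod] at h10
    have h11 : ∏ j, Sr j = ∏ j, (Sq j).toReal := rfl
    have h12 : ∏ j, Tr j = ∏ j, (Tq j).toReal := rfl
    rw [h11, h12]
    linarith
  have hkey : L.toReal ≤ ((∏ j, m j : ℕ) : ℝ)
      * (-1 + ∏ j, (1 + 2 * D * ω ^ (a j * (μ j : ℝ) ^ b j))) := by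
    rw [hLtoReal]
    have h3 := myProdDiff Sr Tr (fun j => (m j : ℝ))
      (fun j => 2 * D * ω ^ (a j * (μ j : ℝ) ^ b j)) hSr0 hTr0 hTrM
      (fun j => by positivity) hSrle
    have h4 : ∏ j, ((m j : ℝ) * (1 + 2 * D * ω ^ (a j * (μ j : ℝ) ^ b j)))
        = ((∏ j, m j : ℕ) : ℝ) * ∏ j, (1 + 2 * D * ω ^ (a j * (μ j : ℝ) ^ b j)) := by
      rw [Finset.prod_mul_distrib, Nat.cast_prod]
    have h5 : ((∏ j, m j : ℕ) : ℝ) = ∏ j, (m j : ℝ) := Nat.cast_prod _ _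
    calc ∏ j, Sr j - ∏ j, Tr j
        ≤ ∏ j, ((m j : ℝ) * (1 + 2 * D * ω ^ (a j * (μ j : ℝ) ^ b j))) - ∏ j, (m j : ℝ) := h3
      _ = ((∏ j, m j : ℕ) : ℝ)
          * (-1 + ∏ j, (1 + 2 * D * ω ^ (a j * (μ j : ℝ) ^ b j))) := by
          rw [h4, ← h5]; ring
  have hRHS0 : 0 ≤ ((∏ j, m j : ℕ) : ℝ)
      * (-1 + ∏ j, (1 + 2 * D * ω ^ (a j * (μ j : ℝ) ^ b j))) := by
    have h6 : (1:ℝ) ≤ ∏ j, (1 + 2 * D * ω ^ (a j * (μ j : ℝ) ^ b j)) := by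
      have h14 := Finset.prod_le_prod (s := Finset.univ) (f := fun _ : Fin s => (1:ℝ))
        (g := fun j => 1 + 2 * D * ω ^ (a j * (μ j : ℝ) ^ b j))
        (fun j _ => by norm_num)
        (fun j _ => by
          have h13 : (0:ℝ) ≤ 2 * D * ω ^ (a j * (μ j : ℝ) ^ b j) := by positivity
          linarith)
      simpa using h14
    have h7 : (0:ℝ) ≤ ((∏ j, m j : ℕ) : ℝ) := Nat.cast_nonneg _
    nlinarith
  refine myBridge (fun x => Real.rpow_nonneg hω0.le _) hRHS0 ?_
  have hGF : ∀ h : Fin s → ℤ, ENNReal.ofReal (ω ^ (∑ j, a j * |(h j : ℝ)| ^ (b j)))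
      = ∏ j, f j (h j) := by
    intro h
    rw [myRpowSum hω0, ENNReal.ofReal_prod_of_nonneg (fun j _ => Real.rpow_nonneg hω0.le _)]
  have hsub : ∑' (x : {h : Fin s → ℤ // ¬ ∀ j, 2 * |h j| ≤ (m j : ℤ) - 1}),
      ENNReal.ofReal (ω ^ (∑ j, a j * |(x.1 j : ℝ)| ^ (b j))) = L := by
    have h8 := tsum_subtype (Vᶜ)
      (fun h : Fin s → ℤ => ENNReal.ofReal (ω ^ (∑ j, a j * |(h j : ℝ)| ^ (b j))))
    rw [hL]
    rw [show (fun h : Fin s → ℤ => ∏ j, f j (h j))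
        = fun h : Fin s → ℤ => ENNReal.ofReal (ω ^ (∑ j, a j * |(h j : ℝ)| ^ (b j)))
      from funext fun h => (hGF h).symm]
    exact h8
  rw [hsub]
  exact (ENNReal.le_ofReal_iff_toReal_le hLfin hRHS0).mpr hkey
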